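/- For every finite n-vertex graph G with unique b-bit vertex identifiers (2^b ≥ n), there exists a subset V' ⊆ V(G) with |V'| ≥ n/2 such that every connected component of G[V'] has diameter at most 4·b·(2b²) = 8b³. -/

import Mathlib

open SimpleGraph

section aux
variable {V : Type*}

/-- Restrict a walk in `G.induce T` to `G.induce S` when all support vertices lie in `S`. -/
lemma walk_restrict_support (G : SimpleGraph V) {S T : Set V} (hST : S ⊆ T) :
    ∀ {u v : T} (p : (G.induce T).Walk u v),
      (∀ w ∈ p.support, (w : V) ∈ S) →
      ∃ (hu : (u : V) ∈ S) (hv : (v : V) ∈ S)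
        (q : (G.induce S).Walk ⟨u, hu⟩ ⟨v, hv⟩), q.length = p.length := by
  intro u v p
  induction p with
  | nil =>
      intro hs
      exact ⟨hs _ (by simp), hs _ (by simp), .nil, by simp⟩
  | @cons a c d h p ih =>
      intro hs
      have ha : (a : V) ∈ S := hs a (by simp)
      obtain ⟨hc, hd, q, hq⟩ := ih (fun w hw => hs w (by simp [hw]))
      refine ⟨ha, hd, Walk.cons (by exact h) q, by exact congrArg (· + 1) hq⟩

/-- Restrict a walk in `G.induce T` to `G.induce S` when `S` is closed under adjacency
from within. -/
lemma walk_restrict_closed (G : SimpleGraph V) {S T : Set V} (hST : S ⊆ T)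
    (hcl : ∀ a b : T, (a : V) ∈ S → (G.induce T).Adj a b → (b : V) ∈ S) :
    ∀ {u v : T} (p : (G.induce T).Walk u v) (hu : (u : V) ∈ S),
      ∃ (hv : (v : V) ∈ S)
        (q : (G.induce S).Walk ⟨u, hu⟩ ⟨v, hv⟩), q.length = p.length := by
  intro u v p
  induction p with
  | nil => intro hu; exact ⟨hu, .nil, rfl⟩
  | @cons a c d h p ih =>
      intro ha
      have hc : (c : V) ∈ S := hcl a c ha h
      obtain ⟨hd, q, hq⟩ := ih hc
      refine ⟨hd, Walk.cons (by exact h) q, by exact congrArg (· + 1) hq⟩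

/-- On a shortest walk, each support vertex is reachable from the start and within the
same distance. -/
lemma shortest_walk_support (G : SimpleGraph V) [DecidableEq V] {x v : V}
    (h : G.Reachable x v) :
    ∃ p : G.Walk x v, p.length = G.dist x v ∧
      ∀ w ∈ p.support, G.Reachable x w ∧ G.dist x w ≤ G.dist x v := by
  obtain ⟨p, hp⟩ := h.exists_walk_length_eq_dist
  refine ⟨p, hp, fun w hw => ⟨⟨p.takeUntil w hw⟩, ?_⟩⟩
  exact (SimpleGraph.dist_le (p.takeUntil w hw)).trans
    ((SimpleGraph.Walk.length_takeUntil_le p hw).trans_eq hp)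

lemma key_lemma [Fintype V] [DecidableEq V] (G : SimpleGraph V) (b : ℕ) (hb : 1 ≤ b)
    (hV : Fintype.card V ≤ 2 ^ b) (A : Finset V) :
    ∃ K : Finset V, K ⊆ A ∧ A.card ≤ 2 * K.card ∧
      ∀ u v : ((K : Set V)), (G.induce (K : Set V)).Reachable u v →
        (G.induce (K : Set V)).dist u v ≤ 2 * b := by
  classical
  induction A using Finset.strongInduction with
  | _ A ih =>
  rcases A.eq_empty_or_nonempty with rfl | ⟨x, hx⟩
  · refine ⟨∅, Finset.Subset.refl _, by simp, fun u v _ => absurd u.2 (by simp)⟩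
  · set T : Set V := (A : Set V) with hT
    set H : SimpleGraph T := G.induce T with hH
    have hxT : x ∈ T := by simpa [hT] using hx
    set x' : T := ⟨x, hxT⟩ with hx'
    set ball : ℕ → Finset T :=
      fun r => Finset.univ.filter (fun v => H.Reachable x' v ∧ H.dist x' v ≤ r) with hball
    have hx'ball : ∀ r, x' ∈ ball r := by
      intro r
      simp only [hball, Finset.mem_filter]
      exact ⟨Finset.mem_univ _, .refl _, by rw [SimpleGraph.dist_self]; exact Nat.zero_le _⟩
    have hmono : ∀ r, ball r ⊆ ball (r + 1) := by
      intro r y hy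
      simp only [hball, Finset.mem_filter] at hy ⊢
      exact ⟨hy.1, hy.2.1, hy.2.2.trans (Nat.le_succ r)⟩
    -- find a radius with small growth
    have hgrow : ∃ r, r + 1 ≤ b ∧ (ball (r + 1)).card ≤ 2 * (ball r).card := by
      by_contra hcon
      push_neg at hcon
      have claim : ∀ r, r ≤ b → 2 ^ (r + 1) ≤ (ball r).card + 1 := by
        intro r
        induction r with
        | zero =>
            intro _
            have : 0 < (ball 0).card := Finset.card_pos.mpr ⟨x', hx'ball 0⟩
            omega
        | succ r ihr =>
            intro hrb
            have h1 := ihr (by omega)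
            have h2 := hcon r (by omega)
            calc 2 ^ (r + 2) = 2 * 2 ^ (r + 1) := by ring
              _ ≤ 2 * ((ball r).card + 1) := by omega
              _ ≤ (ball (r + 1)).card + 1 := by omega
      have h3 := claim b le_rfl
      have h4 : (ball b).card ≤ Fintype.card T := Finset.card_le_univ _
      have h5 : Fintype.card T ≤ Fintype.card V := Fintype.card_le_of_injective _ Subtype.val_injective
      have h6 : 2 ^ (b + 1) = 2 * 2 ^ b := by ring
      have h7 : 2 ≤ 2 ^ b := by
        calc 2 = 2 ^ 1 := by norm_num
          _ ≤ 2 ^ b := Nat.pow_le_pow_right (by norm_num) hb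
      omega
    obtain ⟨r, hrb, hgr⟩ := hgrow
    set B : Finset V := (ball r).image (fun y : T => (y : V)) with hB
    set C : Finset V := ((ball (r + 1)) \ (ball r)).image (fun y : T => (y : V)) with hC
    set Rest : Finset V := A \ (B ∪ C) with hRest
    have hBA : B ⊆ A := by
      intro y hy
      simp only [hB, Finset.mem_image] at hy
      obtain ⟨z, _, rfl⟩ := hy
      exact z.2
    have hxB : x ∈ B := by
      simp only [hB, Finset.mem_image]
      exact ⟨x', hx'ball r, rfl⟩
    have hRestA : Rest ⊂ A := by
      constructor
      · exact Finset.sdiff_subset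
      · intro hsub
        have := hsub hx
        simp only [hRest, Finset.mem_sdiff, Finset.mem_union] at this
        exact this.2 (Or.inl hxB)
    obtain ⟨K', hK'sub, hK'card, hK'good⟩ := ih Rest hRestA
    set K : Finset V := B ∪ K' with hK
    have hK'Rest : ∀ y ∈ K', y ∈ A ∧ y ∉ B ∧ y ∉ C := by
      intro y hy
      have := hK'sub hy
      simp only [hRest, Finset.mem_sdiff, Finset.mem_union] at this
      exact ⟨this.1, fun h => this.2 (Or.inl h), fun h => this.2 (Or.inr h)⟩
    have hKA : K ⊆ A := by
      intro y hy
      rcases Finset.mem_union.mp hy with h | h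
      · exact hBA h
      · exact (hK'Rest y h).1
    -- cardinality
    have hcard : A.card ≤ 2 * K.card := by
      have hdisj : Disjoint B K' := by
        rw [Finset.disjoint_right]
        intro y hy
        exact (hK'Rest y hy).2.1
      have hBcard : B.card = (ball r).card :=
        Finset.card_image_of_injective _ Subtype.val_injective
      have hCcard : C.card = (ball (r + 1)).card - (ball r).card := by
        rw [hC, Finset.card_image_of_injective _ Subtype.val_injective,
          Finset.card_sdiff_of_subset (hmono r)]
      have hAsub : A ⊆ B ∪ C ∪ Rest := by
        intro y hy
        by_cases h : y ∈ B ∪ C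
        · exact Finset.mem_union.mpr (Or.inl h)
        · exact Finset.mem_union.mpr (Or.inr (Finset.mem_sdiff.mpr ⟨hy, h⟩))
      have h1 : A.card ≤ (B ∪ C ∪ Rest).card := Finset.card_le_card hAsub
      have h2 : (B ∪ C ∪ Rest).card ≤ B.card + C.card + Rest.card :=
        (Finset.card_union_le _ _).trans (by
          have := Finset.card_union_le B C
          omega)
      have h3 : K.card = B.card + K'.card := Finset.card_union_of_disjoint hdisj
      have hball_le : (ball r).card ≤ (ball (r+1)).card := Finset.card_le_card (hmono r)
      omega
    -- separation
    have hsep : ∀ a ∈ B, ∀ c ∈ K, G.Adj a c → c ∈ B := by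
      intro a ha c hc hadj
      rcases Finset.mem_union.mp hc with h | h
      · exact h
      · exfalso
        obtain ⟨hcA, hcB, hcC⟩ := hK'Rest c h
        simp only [hB, Finset.mem_image] at ha
        obtain ⟨a', ha', rfl⟩ := ha
        have hcT : c ∈ T := by simpa [hT] using hcA
        set c' : T := ⟨c, hcT⟩ with hc'
        have hadj' : H.Adj a' c' := by exact hadj
        simp only [hball, Finset.mem_filter] at ha'
        obtain ⟨-, hreach, hdist⟩ := ha'
        have hreachc : H.Reachable x' c' := hreach.trans ⟨hadj'.toWalk⟩
        have hdistc : H.dist x' c' ≤ r + 1 := by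
          obtain ⟨p, hp⟩ := hreach.exists_walk_length_eq_dist
          have := SimpleGraph.dist_le (p.concat hadj')
          rw [SimpleGraph.Walk.length_concat, hp] at this
          omega
        have hc'ball : c' ∈ ball (r + 1) := by
          simp only [hball, Finset.mem_filter]
          exact ⟨Finset.mem_univ _, hreachc, hdistc⟩
        by_cases hcr : c' ∈ ball r
        · exact hcB (by simp only [hB, Finset.mem_image]; exact ⟨c', hcr, rfl⟩)
        · exact hcC (by
            simp only [hC, Finset.mem_image]
            exact ⟨c', Finset.mem_sdiff.mpr ⟨hc'ball, hcr⟩, rfl⟩)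
    refine ⟨K, hKA, hcard, ?_⟩
    intro u v hreach
    obtain ⟨p⟩ := hreach
    have hBK : (B : Set V) ⊆ (K : Set V) := by
      have h : B ⊆ K := by rw [hK]; exact Finset.subset_union_left
      exact Finset.coe_subset.mpr h
    have hK'K : ((K' : Set V)) ⊆ (K : Set V) := by
      have h : K' ⊆ K := by rw [hK]; exact Finset.subset_union_right
      exact Finset.coe_subset.mpr h
    rcases Finset.mem_union.mp (Finset.mem_coe.mp u.2) with hu | hu
    · -- u lies in the ball B
      have hcl : ∀ a c : (K : Set V), (a : V) ∈ (B : Set V) →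
          (G.induce (K : Set V)).Adj a c → (c : V) ∈ (B : Set V) := by
        intro a c ha hadj
        exact Finset.mem_coe.mpr
          (hsep a (Finset.mem_coe.mp ha) c (Finset.mem_coe.mp c.2) hadj)
      obtain ⟨hv, q, -⟩ := walk_restrict_closed G hBK hcl p (Finset.mem_coe.mpr hu)
      -- get short walks to the center inside B
      have hkey : ∀ (y : V) (hy : y ∈ B), ∃ (hyB : y ∈ (B : Set V)) (hxB : x ∈ (B : Set V))
          (q : (G.induce (B : Set V)).Walk ⟨x, hxB⟩ ⟨y, hyB⟩), q.length ≤ r := by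
        intro y hy
        simp only [hB, Finset.mem_image] at hy
        obtain ⟨y', hy', rfl⟩ := hy
        simp only [hball, Finset.mem_filter] at hy'
        obtain ⟨-, hybreach, hydist⟩ := hy'
        obtain ⟨p1, hp1len, hp1sup⟩ := shortest_walk_support H hybreach
        have hsup : ∀ w ∈ p1.support, (w : V) ∈ (B : Set V) := by
          intro w hw
          obtain ⟨hwreach, hwdist⟩ := hp1sup w hw
          refine Finset.mem_coe.mpr ?_
          simp only [hB, Finset.mem_image]
          exact ⟨w, by
            simp only [hball, Finset.mem_filter]
            exact ⟨Finset.mem_univ _, hwreach, hwdist.trans hydist⟩, rfl⟩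
        have hBT : (B : Set V) ⊆ T := by
          intro z hz; exact Finset.mem_coe.mpr (hBA (Finset.mem_coe.mp hz))
        obtain ⟨hxB, hyB, q1, hq1len⟩ := walk_restrict_support G hBT p1 hsup
        exact ⟨hyB, hxB, q1, by rw [hq1len, hp1len]; exact hydist⟩
      obtain ⟨huB, hxB1, qu, hqu⟩ := hkey (↑u) hu
      obtain ⟨hvB, hxB2, qv, hqv⟩ := hkey (↑v) (Finset.mem_coe.mp hv)
      have hle := SimpleGraph.dist_le
        (((qu.reverse.append qv : (G.induce (B : Set V)).Walk ⟨(u : V), huB⟩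
          ⟨(v : V), hvB⟩)).map (G.induceHomOfLE hBK).toHom)
      rw [SimpleGraph.Walk.length_map, SimpleGraph.Walk.length_append,
        SimpleGraph.Walk.length_reverse] at hle
      have heq1 : (G.induceHomOfLE hBK).toHom ⟨(u : V), huB⟩ = u := Subtype.ext rfl
      have heq2 : (G.induceHomOfLE hBK).toHom ⟨(v : V), hvB⟩ = v := Subtype.ext rfl
      rw [heq1, heq2] at hle
      omega
    · -- u lies in K'
      have hcl : ∀ a c : (K : Set V), (a : V) ∈ (K' : Set V) →
          (G.induce (K : Set V)).Adj a c → (c : V) ∈ (K' : Set V) := by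
        intro a c ha hadj
        rcases Finset.mem_union.mp (Finset.mem_coe.mp c.2) with h | h
        · exfalso
          have := hsep c h a (Finset.mem_coe.mp a.2) hadj.symm
          exact (hK'Rest a (Finset.mem_coe.mp ha)).2.1 this
        · exact Finset.mem_coe.mpr h
      obtain ⟨hv, q, -⟩ := walk_restrict_closed G hK'K hcl p (Finset.mem_coe.mpr hu)
      have hreach' : (G.induce (K' : Set V)).Reachable ⟨u, by exact Finset.mem_coe.mpr hu⟩
          ⟨v, hv⟩ := ⟨q⟩
      have hd := hK'good _ _ hreach'
      obtain ⟨q', hq'⟩ := hreach'.exists_walk_length_eq_dist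
      have := SimpleGraph.dist_le (q'.map (G.induceHomOfLE hK'K).toHom)
      rw [SimpleGraph.Walk.length_map, hq'] at this
      have heq1 : (G.induceHomOfLE hK'K).toHom ⟨u, Finset.mem_coe.mpr hu⟩ = u :=
        Subtype.ext rfl
      have heq2 : (G.induceHomOfLE hK'K).toHom ⟨v, hv⟩ = v := Subtype.ext rfl
      rw [heq1, heq2] at this
      omega

end aux

theorem main_clustering_exists {V : Type*} [Fintype V] [DecidableEq V]
    (G : SimpleGraph V) (n : ℕ) (hn : n = Fintype.card V)
    (b : ℕ) (hb : n ≤ 2 ^ b)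
    (ident : V → Fin b → Bool) (hinj : Function.Injective ident) :
    ∃ V' : Finset V, 2 * V'.card ≥ n ∧
      ∀ u v : (V' : Set V), (G.induce (V' : Set V)).Reachable u v →
        (G.induce (V' : Set V)).dist u v ≤ 8 * b ^ 3 := by
  classical
  rcases Nat.eq_zero_or_pos b with rfl | hb1
  · have hcard : Fintype.card V ≤ 1 := by rw [← hn]; simpa using hb
    haveI : Subsingleton V := Fintype.card_le_one_iff_subsingleton.mp hcard
    refine ⟨Finset.univ, ?_, ?_⟩
    · have h := Finset.card_univ (α := V)
      omega
    · intro u v _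
      have huv : u = v := Subtype.ext (Subsingleton.elim _ _)
      rw [huv, SimpleGraph.dist_self]
      exact Nat.zero_le _
  · obtain ⟨K, -, hcard, hgood⟩ := key_lemma G b hb1 (by rw [← hn]; exact hb) Finset.univ
    refine ⟨K, ?_, fun u v h => (hgood u v h).trans ?_⟩
    · have h := Finset.card_univ (α := V)
      omega
    · nlinarith [hb1, sq_nonneg b]
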